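/- The two-sided ideals of M₂(ℝ̄) are totally ordered under inclusion: for any two ideals I and J of M₂(ℝ̄), either I ⊆ J or J ⊆ I. -/

import Mathlib

open scoped Classical ENNReal

/-- The tropical semiring `ℝ̄ = ℝ ∪ {-∞}`, carried by `WithBot ℝ`;
tropical addition is `max` and tropical multiplication is `+`. -/
abbrev Rb : Type := WithBot ℝ

/-- Tropical matrix multiplication. -/
noncomputable def tMul {n : ℕ} (A B : Fin n → Fin n → Rb) : Fin n → Fin n → Rb :=
  fun i j => Finset.univ.sup fun k => A i k + B k j

/-- The column space of a matrix: all tropical linear combinations of its columns. -/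
def ColSpace {n : ℕ} (A : Fin n → Fin n → Rb) : Set (Fin n → Rb) :=
  {v | ∃ c : Fin n → Rb, ∀ i, v i = Finset.univ.sup fun j => c j + A i j}

/-- The row space of a matrix: all tropical linear combinations of its rows. -/
def RowSpace {n : ℕ} (A : Fin n → Fin n → Rb) : Set (Fin n → Rb) :=
  {v | ∃ c : Fin n → Rb, ∀ j, v j = Finset.univ.sup fun i => c i + A i j}

abbrev Mat2 : Type := Fin 2 → Fin 2 → Rb

/-- Inclusion of `ℝ̄` into the projective line `ℝ̂ = ℝ ∪ {-∞, +∞}` (modelled by `EReal`). -/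
noncomputable def toE : Rb → EReal := WithBot.recBotCoe ⊥ (fun r : ℝ => (r : EReal))

/-- Projection of a vector `(a, b)` to `b - a ∈ ℝ̂`. -/
noncomputable def projPt (v : Fin 2 → Rb) : EReal := toE (v 1) - toE (v 0)

def zeroVec : Fin 2 → Rb := fun _ => ⊥

/-- Projective column space. -/
noncomputable def PC (A : Mat2) : Set EReal :=
  {z | ∃ v ∈ ColSpace A, v ≠ zeroVec ∧ projPt v = z}

/-- Projective row space. -/
noncomputable def PR (A : Mat2) : Set EReal :=
  {z | ∃ v ∈ RowSpace A, v ≠ zeroVec ∧ projPt v = z}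

/-- The metric `δ` on `ℝ̂`. -/
noncomputable def delta (x y : EReal) : ℝ≥0∞ :=
  if (∃ a : ℝ, x = (a : EReal)) ∧ (∃ b : ℝ, y = (b : EReal)) then
    ENNReal.ofReal |x.toReal - y.toReal|
  else if x = y then 0 else ⊤

/-- `M` embeds isometrically into `N`. -/
def IsomEmbed (M N : Set EReal) : Prop :=
  ∃ f : EReal → EReal, Set.MapsTo f M N ∧ Set.InjOn f M ∧
    ∀ x ∈ M, ∀ y ∈ M, delta (f x) (f y) = delta x y

/-- `M` and `N` are isometric. -/
def Isom (M N : Set EReal) : Prop :=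
  ∃ f : EReal → EReal, Set.BijOn f M N ∧
    ∀ x ∈ M, ∀ y ∈ M, delta (f x) (f y) = delta x y

/-- Closed convex subsets of `ℝ̂`: the empty set, singletons and closed intervals. -/
def IsClosedConvex (S : Set EReal) : Prop :=
  S = ∅ ∨ ∃ x y : EReal, x ≤ y ∧ S = Set.Icc x y

/-- An ideal of the monoid of `2 × 2` tropical matrices. -/
noncomputable def IsIdeal (I : Set Mat2) : Prop :=
  I.Nonempty ∧ ∀ A ∈ I, ∀ X Y : Mat2, tMul (tMul X A) Y ∈ I

section AuxTropical

lemma sup2 (f : Fin 2 → Rb) : Finset.univ.sup f = f 0 ⊔ f 1 := by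
  show Finset.sup {0,1} f = _
  simp [Finset.sup_insert]

lemma tMul_apply (A B : Mat2) (i j : Fin 2) :
    tMul A B i j = (A i 0 + B 0 j) ⊔ (A i 1 + B 1 j) := by
  simp [tMul, sup2]

lemma supAdd (a b c : Rb) : (a ⊔ b) + c = (a + c) ⊔ (b + c) := by
  rcases le_total a b with h | h
  · simp [sup_eq_right.2 h, sup_eq_right.2 (add_le_add h (le_refl c))]
  · simp [sup_eq_left.2 h, sup_eq_left.2 (add_le_add h (le_refl c))]

lemma addSup (a b c : Rb) : a + (b ⊔ c) = (a + b) ⊔ (a + c) := by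
  rcases le_total b c with h | h
  · simp [sup_eq_right.2 h, sup_eq_right.2 (add_le_add (le_refl a) h)]
  · simp [sup_eq_left.2 h, sup_eq_left.2 (add_le_add (le_refl a) h)]

lemma tMul_assoc (A B C : Mat2) : tMul (tMul A B) C = tMul A (tMul B C) := by
  funext i j
  simp only [tMul_apply, supAdd, addSup, add_assoc]
  rw [sup_sup_sup_comm]

noncomputable def IdM : Mat2 := ![![(0:Rb), ⊥], ![⊥, (0:Rb)]]

lemma Id_tMul (A : Mat2) : tMul IdM A = A := by
  funext i j
  fin_cases i <;> simp [tMul_apply, IdM]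

lemma tMul_Id (A : Mat2) : tMul A IdM = A := by
  funext i j
  fin_cases j <;> simp [tMul_apply, IdM]

/-- `A` lies in the two-sided ideal generated by `B`. -/
def reach (B A : Mat2) : Prop := ∃ X Y, tMul (tMul X B) Y = A

lemma reach_trans {A B C : Mat2} (h1 : reach A B) (h2 : reach B C) : reach A C := by
  obtain ⟨X1, Y1, h1⟩ := h1
  obtain ⟨X2, Y2, h2⟩ := h2
  exact ⟨tMul X2 X1, tMul Y1 Y2, by rw [← h2, ← h1]; simp only [tMul_assoc]⟩

def ZM : Mat2 := fun _ _ => ⊥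

lemma reach_zero (B : Mat2) : reach B ZM := by
  refine ⟨ZM, ZM, ?_⟩
  funext i j
  simp [tMul_apply, ZM]

lemma cancel2 (x : ℝ) (a b : Rb) : (a + ↑(-x)) + (((x:ℝ) : Rb) + b) = a + b := by
  induction a using WithBot.recBotCoe with
  | bot => simp
  | coe r =>
    induction b using WithBot.recBotCoe with
    | bot => simp
    | coe s =>
      rw [← WithBot.coe_add, ← WithBot.coe_add, ← WithBot.coe_add, ← WithBot.coe_add,
        WithBot.coe_inj]
      ring

lemma cancel3 (x y : ℝ) (a : Rb) :
    ((-x : ℝ) : Rb) + (((x:ℝ):Rb) + (a + (((y:ℝ):Rb) + ((-y:ℝ):Rb)))) = a := by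
  induction a using WithBot.recBotCoe with
  | bot => simp
  | coe r =>
    rw [← WithBot.coe_add, ← WithBot.coe_add, ← WithBot.coe_add, ← WithBot.coe_add,
      WithBot.coe_inj]
    ring

lemma trip2 (B : Mat2) (p q : Fin 2) (c r : Fin 2 → Rb) (i j : Fin 2) :
    tMul (tMul (fun i k => if k = p then c i else ⊥) B)
      (fun l j => if l = q then r j else ⊥) i j = c i + (B p q + r j) := by
  fin_cases p <;> fin_cases q <;> simp [tMul_apply, add_assoc]

noncomputable def MonoL (s : Fin 2) (u : Fin 2 → Rb) : Mat2 :=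
  fun i k => if k = i + s then u i else ⊥
noncomputable def MonoR (t : Fin 2) (v : Fin 2 → Rb) : Mat2 :=
  fun l j => if l = j + t then v j else ⊥

lemma trip (B : Mat2) (s t : Fin 2) (u v : Fin 2 → Rb) (i j : Fin 2) :
    tMul (tMul (MonoL s u) B) (MonoR t v) i j = u i + (B (i + s) (j + t) + v j) := by
  fin_cases s <;> fin_cases t <;> fin_cases i <;> fin_cases j <;>
    simp [tMul_apply, MonoL, MonoR, add_assoc]

/-- `B` arises from `A` by permuting rows and columns and tropically scaling them. -/
def mequiv (A B : Mat2) : Prop :=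
  ∃ (s t : Fin 2) (u v : Fin 2 → ℝ),
    ∀ i j, B i j = ((u i : ℝ) : Rb) + (A (i + s) (j + t) + ((v j : ℝ) : Rb))

lemma fin2_add_add (i s : Fin 2) : i + s + s = i := by revert i s; decide

lemma f00 : (0:Fin 2) + 0 = 0 := by decide
lemma f01 : (0:Fin 2) + 1 = 1 := by decide
lemma f10 : (1:Fin 2) + 0 = 1 := by decide
lemma f11 : (1:Fin 2) + 1 = 0 := by decide

lemma mequiv_symm {A B : Mat2} (h : mequiv A B) : mequiv B A := by
  obtain ⟨s, t, u, v, h⟩ := h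
  refine ⟨s, t, fun i => -(u (i + s)), fun j => -(v (j + t)), fun i j => ?_⟩
  rw [h (i + s) (j + t), fin2_add_add, fin2_add_add]
  simp only [add_assoc]
  exact (cancel3 (u (i+s)) (v (j+t)) (A i j)).symm

lemma mequiv_reach {A B : Mat2} (h : mequiv A B) : reach A B := by
  obtain ⟨s, t, u, v, h⟩ := h
  refine ⟨MonoL s (fun i => ((u i : ℝ) : Rb)), MonoR t (fun j => ((v j : ℝ) : Rb)), ?_⟩
  funext i j
  rw [trip, ← h]

/-- `A` lies in the ideal of `B` whenever `B` is nonzero and `A` has rank at most one. -/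
lemma reach_rank1 (B : Mat2) (p q : Fin 2) (hpq : B p q ≠ ⊥) (c r : Fin 2 → Rb) :
    reach B (fun i j => c i + r j) := by
  obtain ⟨b, hb⟩ := WithBot.ne_bot_iff_exists.1 hpq
  refine ⟨fun i k => if k = p then c i + ((-b : ℝ) : Rb) else ⊥,
    fun l j => if l = q then r j else ⊥, ?_⟩
  funext i j
  rw [trip2, ← hb]
  exact cancel2 b (c i) (r j)

def rankLE1 (M : Mat2) : Prop := ∃ c r : Fin 2 → Rb, ∀ i j, M i j = c i + r j

lemma fin2_ne : ∀ {i k : Fin 2}, i ≠ k → i = k + 1 := by decide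

lemma r1_row (M : Mat2) (k : Fin 2) (h0 : M k 0 = ⊥) (h1 : M k 1 = ⊥) : rankLE1 M := by
  refine ⟨fun i => if i = k then ⊥ else 0, fun j => M (k + 1) j, fun i j => ?_⟩
  by_cases hik : i = k
  · subst hik
    fin_cases j <;> simp [h0, h1]
  · rw [fin2_ne hik]; simp

lemma r1_col (M : Mat2) (k : Fin 2) (h0 : M 0 k = ⊥) (h1 : M 1 k = ⊥) : rankLE1 M := by
  refine ⟨fun i => M i (k + 1), fun j => if j = k then ⊥ else 0, fun i j => ?_⟩
  by_cases hjk : j = k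
  · subst hjk
    fin_cases i <;> simp [h0, h1]
  · rw [fin2_ne hjk]; simp

lemma r1_allreal (M : Mat2) (a b c d : ℝ) (h00 : M 0 0 = ↑a) (h01 : M 0 1 = ↑b)
    (h10 : M 1 0 = ↑c) (h11 : M 1 1 = ↑d) (h : a + d = b + c) : rankLE1 M := by
  refine ⟨![(0:Rb), ((c - a : ℝ) : Rb)], ![((a:ℝ):Rb), ((b:ℝ):Rb)], fun i j => ?_⟩
  fin_cases i <;> fin_cases j <;>
    simp only [Fin.mk_zero, Fin.mk_one, Fin.isValue, h00, h01, h10, h11,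
      Matrix.cons_val_zero, Matrix.cons_val_one, Matrix.head_cons,
      ← WithBot.coe_zero, ← WithBot.coe_add, WithBot.coe_inj] <;> linarith

noncomputable def EM : Mat2 := ![![(0:Rb), 0], ![0, ⊥]]
noncomputable def DLm (L : ℝ) : Mat2 := ![![(0:Rb), 0], ![0, ((-L : ℝ) : Rb)]]

lemma normE_gen (M : Mat2) (s t : Fin 2) (a b c : ℝ)
    (h11 : M (1 + s) (1 + t) = ⊥) (h00 : M (0 + s) (0 + t) = ↑a)
    (h01 : M (0 + s) (1 + t) = ↑b) (h10 : M (1 + s) (0 + t) = ↑c) :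
    mequiv M EM := by
  refine ⟨s, t, ![0, a - c], ![-a, -b], fun i j => ?_⟩
  fin_cases i <;> fin_cases j <;>
    simp only [EM, Fin.mk_zero, Fin.mk_one, Fin.isValue, h00, h01, h10, h11,
      Matrix.cons_val_zero, Matrix.cons_val_one, Matrix.head_cons,
      WithBot.add_bot, WithBot.bot_add,
      ← WithBot.coe_zero, ← WithBot.coe_add, WithBot.coe_inj] <;>
    ring_nf

lemma normD (M : Mat2) (a b c d : ℝ) (h00 : M 0 0 = ↑a) (h01 : M 0 1 = ↑b)
    (h10 : M 1 0 = ↑c) (h11 : M 1 1 = ↑d) (hne : a + d ≠ b + c) :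
    ∃ L : ℝ, 0 < L ∧ mequiv M (DLm L) := by
  rcases lt_or_gt_of_ne hne with h | h
  · refine ⟨b + c - a - d, by linarith, 0, 0, ![0, a - c], ![-a, -b], fun i j => ?_⟩
    fin_cases i <;> fin_cases j <;>
      simp only [DLm, Fin.mk_zero, Fin.mk_one, Fin.isValue, f00, f01, f10, f11,
        h00, h01, h10, h11, Matrix.cons_val_zero, Matrix.cons_val_one, Matrix.head_cons,
        ← WithBot.coe_zero, ← WithBot.coe_add, WithBot.coe_inj] <;> ring
  · refine ⟨a + d - b - c, by linarith, 0, 1, ![0, b - d], ![-b, -a], fun i j => ?_⟩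
    fin_cases i <;> fin_cases j <;>
      simp only [DLm, Fin.mk_zero, Fin.mk_one, Fin.isValue, f00, f01, f10, f11,
        h00, h01, h10, h11, Matrix.cons_val_zero, Matrix.cons_val_one, Matrix.head_cons,
        ← WithBot.coe_zero, ← WithBot.coe_add, WithBot.coe_inj] <;> ring

lemma unit_reach {M N : Mat2} (h1 : tMul N M = IdM) (A : Mat2) : reach M A :=
  ⟨tMul A N, IdM, by rw [tMul_Id, tMul_assoc, h1, tMul_Id]⟩

lemma unit_diag (M : Mat2) (a d : ℝ) (h00 : M 0 0 = ↑a) (h01 : M 0 1 = ⊥)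
    (h10 : M 1 0 = ⊥) (h11 : M 1 1 = ↑d) :
    tMul ![![((-a : ℝ) : Rb), ⊥], ![⊥, ((-d : ℝ) : Rb)]] M = IdM := by
  funext i j
  fin_cases i <;> fin_cases j <;>
    simp [tMul_apply, IdM, h00, h01, h10, h11, ← WithBot.coe_add]

lemma unit_antidiag (M : Mat2) (b c : ℝ) (h00 : M 0 0 = ⊥) (h01 : M 0 1 = ↑b)
    (h10 : M 1 0 = ↑c) (h11 : M 1 1 = ⊥) :
    tMul ![![⊥, ((-c : ℝ) : Rb)], ![((-b : ℝ) : Rb), ⊥]] M = IdM := by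
  funext i j
  fin_cases i <;> fin_cases j <;>
    simp [tMul_apply, IdM, h00, h01, h10, h11, ← WithBot.coe_add]

lemma XD_calc (L' : ℝ) (hL : 0 ≤ L') (M : Mat2) (h00 : M 0 0 = 0) (h01 : M 0 1 = 0)
    (h10 : M 1 0 = 0) (h11 : M 1 1 ≤ ((-L' : ℝ) : Rb)) :
    tMul ![![(0:Rb), ⊥], ![((-L' : ℝ) : Rb), (0:Rb)]] M = DLm L' := by
  have hneg : ((-L' : ℝ) : Rb) ≤ 0 := by
    rw [← WithBot.coe_zero, WithBot.coe_le_coe]; linarith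
  funext i j
  fin_cases i <;> fin_cases j
  · simp [tMul_apply, DLm, h00]
  · simp [tMul_apply, DLm, h01]
  · simp [tMul_apply, DLm, h00, h10, sup_eq_right.2 hneg]
  · simp [tMul_apply, DLm, h01, h11, sup_eq_left.2 h11]

lemma DfromD (L L' : ℝ) (h0 : 0 ≤ L') (h : L' ≤ L) : reach (DLm L) (DLm L') := by
  refine ⟨![![(0:Rb), ⊥], ![((-L' : ℝ) : Rb), (0:Rb)]], IdM, ?_⟩
  rw [tMul_Id]
  refine XD_calc L' h0 (DLm L) rfl rfl rfl ?_
  show ((-L : ℝ) : Rb) ≤ ((-L' : ℝ) : Rb)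
  exact_mod_cast neg_le_neg h

lemma DfromE (L' : ℝ) (h0 : 0 ≤ L') : reach EM (DLm L') := by
  refine ⟨![![(0:Rb), ⊥], ![((-L' : ℝ) : Rb), (0:Rb)]], IdM, ?_⟩
  rw [tMul_Id]
  exact XD_calc L' h0 EM rfl rfl rfl bot_le

lemma classify {M : Mat2} (h : ¬ rankLE1 M) :
    (∃ N, tMul N M = IdM) ∨ (∃ L : ℝ, 0 < L ∧ mequiv M (DLm L)) ∨ mequiv M EM := by
  by_cases h00 : M 0 0 = ⊥ <;> by_cases h01 : M 0 1 = ⊥ <;>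
    by_cases h10 : M 1 0 = ⊥ <;> by_cases h11 : M 1 1 = ⊥
  · exact absurd (r1_row M 0 h00 h01) h
  · exact absurd (r1_row M 0 h00 h01) h
  · exact absurd (r1_row M 0 h00 h01) h
  · exact absurd (r1_row M 0 h00 h01) h
  · exact absurd (r1_col M 0 h00 h10) h
  · exact absurd (r1_col M 0 h00 h10) h
  · -- ⊥ at 00 and 11 : antidiagonal unit
    obtain ⟨b, hb⟩ := WithBot.ne_bot_iff_exists.1 h01
    obtain ⟨c, hc⟩ := WithBot.ne_bot_iff_exists.1 h10
    exact Or.inl ⟨_, unit_antidiag M b c h00 hb.symm hc.symm h11⟩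
  · -- ⊥ at 00 only
    obtain ⟨a, ha⟩ := WithBot.ne_bot_iff_exists.1 h11
    obtain ⟨b, hb⟩ := WithBot.ne_bot_iff_exists.1 h10
    obtain ⟨c, hc⟩ := WithBot.ne_bot_iff_exists.1 h01
    refine Or.inr (Or.inr (normE_gen M 1 1 a b c ?_ ?_ ?_ ?_)) <;>
      simp only [f00, f01, f10, f11] <;> (first | assumption | exact ha.symm | exact hb.symm | exact hc.symm)
  · exact absurd (r1_col M 1 h01 h11) h
  · -- ⊥ at 01 and 10 : diagonal unit
    obtain ⟨a, ha⟩ := WithBot.ne_bot_iff_exists.1 h00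
    obtain ⟨d, hd⟩ := WithBot.ne_bot_iff_exists.1 h11
    exact Or.inl ⟨_, unit_diag M a d ha.symm h01 h10 hd.symm⟩
  · exact absurd (r1_col M 1 h01 h11) h
  · -- ⊥ at 01 only
    obtain ⟨a, ha⟩ := WithBot.ne_bot_iff_exists.1 h10
    obtain ⟨b, hb⟩ := WithBot.ne_bot_iff_exists.1 h11
    obtain ⟨c, hc⟩ := WithBot.ne_bot_iff_exists.1 h00
    refine Or.inr (Or.inr (normE_gen M 1 0 a b c ?_ ?_ ?_ ?_)) <;>
      simp only [f00, f01, f10, f11] <;> (first | assumption | exact ha.symm | exact hb.symm | exact hc.symm)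
  · exact absurd (r1_row M 1 h10 h11) h
  · -- ⊥ at 10 only
    obtain ⟨a, ha⟩ := WithBot.ne_bot_iff_exists.1 h01
    obtain ⟨b, hb⟩ := WithBot.ne_bot_iff_exists.1 h00
    obtain ⟨c, hc⟩ := WithBot.ne_bot_iff_exists.1 h11
    refine Or.inr (Or.inr (normE_gen M 0 1 a b c ?_ ?_ ?_ ?_)) <;>
      simp only [f00, f01, f10, f11] <;> (first | assumption | exact ha.symm | exact hb.symm | exact hc.symm)
  · -- ⊥ at 11 only
    obtain ⟨a, ha⟩ := WithBot.ne_bot_iff_exists.1 h00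
    obtain ⟨b, hb⟩ := WithBot.ne_bot_iff_exists.1 h01
    obtain ⟨c, hc⟩ := WithBot.ne_bot_iff_exists.1 h10
    refine Or.inr (Or.inr (normE_gen M 0 0 a b c ?_ ?_ ?_ ?_)) <;>
      simp only [f00, f01, f10, f11] <;> (first | assumption | exact ha.symm | exact hb.symm | exact hc.symm)
  · -- all entries real
    obtain ⟨a, ha⟩ := WithBot.ne_bot_iff_exists.1 h00
    obtain ⟨b, hb⟩ := WithBot.ne_bot_iff_exists.1 h01
    obtain ⟨c, hc⟩ := WithBot.ne_bot_iff_exists.1 h10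
    obtain ⟨d, hd⟩ := WithBot.ne_bot_iff_exists.1 h11
    by_cases had : a + d = b + c
    · exact absurd (r1_allreal M a b c d ha.symm hb.symm hc.symm hd.symm had) h
    · exact Or.inr (Or.inl (normD M a b c d ha.symm hb.symm hc.symm hd.symm had))

lemma key (A B : Mat2) : reach A B ∨ reach B A := by
  by_cases hA : rankLE1 A
  · by_cases hB : ∀ i j, B i j = ⊥
    · left
      have hBZ : B = ZM := funext fun i => funext fun j => hB i j
      rw [hBZ]; exact reach_zero A
    · right
      push_neg at hB
      obtain ⟨p, q, hpq⟩ := hB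
      obtain ⟨c, r, hcr⟩ := hA
      rw [show A = fun i j => c i + r j from funext fun i => funext fun j => hcr i j]
      exact reach_rank1 B p q hpq c r
  · by_cases hB : rankLE1 B
    · left
      by_cases hA0 : ∀ i j, A i j = ⊥
      · exact absurd (r1_row A 0 (hA0 0 0) (hA0 0 1)) hA
      · push_neg at hA0
        obtain ⟨p, q, hpq⟩ := hA0
        obtain ⟨c, r, hcr⟩ := hB
        rw [show B = fun i j => c i + r j from funext fun i => funext fun j => hcr i j]
        exact reach_rank1 A p q hpq c r
    · rcases classify hA with ⟨N, hN⟩ | ⟨La, hLa, hA'⟩ | hA'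
      · exact Or.inl (unit_reach hN B)
      · rcases classify hB with ⟨N, hN⟩ | ⟨Lb, hLb, hB'⟩ | hB'
        · exact Or.inr (unit_reach hN A)
        · rcases le_total La Lb with hl | hl
          · exact Or.inr (reach_trans (mequiv_reach hB')
              (reach_trans (DfromD Lb La hLa.le hl) (mequiv_reach (mequiv_symm hA'))))
          · exact Or.inl (reach_trans (mequiv_reach hA')
              (reach_trans (DfromD La Lb hLb.le hl) (mequiv_reach (mequiv_symm hB'))))
        · exact Or.inr (reach_trans (mequiv_reach hB')
            (reach_trans (DfromE La hLa.le) (mequiv_reach (mequiv_symm hA'))))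
      · rcases classify hB with ⟨N, hN⟩ | ⟨Lb, hLb, hB'⟩ | hB'
        · exact Or.inr (unit_reach hN A)
        · exact Or.inl (reach_trans (mequiv_reach hA')
            (reach_trans (DfromE Lb hLb.le) (mequiv_reach (mequiv_symm hB'))))
        · exact Or.inr (reach_trans (mequiv_reach hB') (mequiv_reach (mequiv_symm hA')))

end AuxTropical

/-- the two-sided ideals of `M₂(ℝ̄)` are totally ordered by inclusion. -/
theorem ideals_totally_ordered (I J : Set Mat2) (hI : IsIdeal I) (hJ : IsIdeal J) :
    I ⊆ J ∨ J ⊆ I := by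
  by_cases hIJ : I ⊆ J
  · exact Or.inl hIJ
  · right
    rw [Set.not_subset] at hIJ
    obtain ⟨A, hAI, hAJ⟩ := hIJ
    intro B hB
    rcases key A B with ⟨X, Y, hXY⟩ | ⟨X, Y, hXY⟩
    · exact hXY ▸ hI.2 A hAI X Y
    · exact absurd (hXY ▸ hJ.2 B hB X Y) hAJ
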